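/- If X is a nonnegative random variable with density f_X(x) = k/(k+x)² on [0,∞) for some k > 0 with k ≠ 1, then E[log₂(1+X)] = log₂(1/k)/(1/k − 1). -/

import Mathlib

open MeasureTheory Real Filter Set
open scoped ENNReal NNReal

lemma aux_deriv (k : ℝ) (hk : 0 < k) (hk1 : k ≠ 1) {x : ℝ} (hx : 0 ≤ x) :
    HasDerivAt (fun x => (k/(k-1)) * (Real.log (1+x) - Real.log (k+x)) - k * Real.log (1+x) / (k+x))
      (k * Real.log (1+x) / (k+x)^2) x := by
  have h1 : (0:ℝ) < 1 + x := by linarith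
  have h2 : (0:ℝ) < k + x := by linarith
  have hk1' : k - 1 ≠ 0 := sub_ne_zero.mpr hk1
  have d1 : HasDerivAt (fun x : ℝ => Real.log (1 + x)) (1+x)⁻¹ x := by
    have := (Real.hasDerivAt_log h1.ne').comp x ((hasDerivAt_id x).const_add 1)
    simpa [Function.comp_def] using this
  have d2 : HasDerivAt (fun x : ℝ => Real.log (k + x)) (k+x)⁻¹ x := by
    have := (Real.hasDerivAt_log h2.ne').comp x ((hasDerivAt_id x).const_add k)
    simpa [Function.comp_def] using this
  have dA := (d1.sub d2).const_mul (k/(k-1))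
  have dB := ((d1.const_mul k).div ((hasDerivAt_id x).const_add k) h2.ne')
  have := dA.sub dB
  refine this.congr_deriv ?_
  simp only [id]
  field_simp
  ring

lemma aux_tendsto (k : ℝ) (hk : 0 < k) :
    Tendsto (fun x => (k/(k-1)) * (Real.log (1+x) - Real.log (k+x)) - k * Real.log (1+x) / (k+x))
      atTop (nhds 0) := by
  have hkx : Tendsto (fun x : ℝ => k + x) atTop atTop :=
    tendsto_atTop_add_const_left _ k tendsto_id
  have h1x : Tendsto (fun x : ℝ => 1 + x) atTop atTop :=
    tendsto_atTop_add_const_left _ 1 tendsto_id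
  have hA : Tendsto (fun x : ℝ => Real.log (1+x) - Real.log (k+x)) atTop (nhds 0) := by
    have hratio : Tendsto (fun x : ℝ => (1+x)/(k+x)) atTop (nhds 1) := by
      have h0 : Tendsto (fun x : ℝ => (1-k)/(k+x)) atTop (nhds 0) :=
        tendsto_const_nhds.div_atTop hkx
      have := h0.const_add (1:ℝ)
      rw [add_zero] at this
      apply this.congr'
      filter_upwards [eventually_gt_atTop (0:ℝ)] with x hx
      have h2 : (0:ℝ) < k + x := by linarith
      field_simp
      ring
    have := hratio.log one_ne_zero
    rw [Real.log_one] at this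
    apply this.congr'
    filter_upwards [eventually_gt_atTop (0:ℝ)] with x hx
    have h1 : (0:ℝ) < 1 + x := by linarith
    have h2 : (0:ℝ) < k + x := by linarith
    rw [Real.log_div h1.ne' h2.ne']
  have hB : Tendsto (fun x : ℝ => Real.log (1+x) / (k+x)) atTop (nhds 0) := by
    have := (Real.tendsto_pow_log_div_mul_add_atTop 1 (k-1) 1 one_ne_zero).comp h1x
    apply this.congr
    intro x
    simp only [Function.comp_apply, pow_one, one_mul]
    ring_nf
  have := (hA.const_mul (k/(k-1))).sub (hB.const_mul k)
  simp only [mul_zero, sub_zero] at this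
  apply this.congr
  intro x
  ring

lemma aux_integral (k : ℝ) (hk : 0 < k) (hk1 : k ≠ 1) :
    ∫ x in Ioi (0:ℝ), k * Real.log (1+x) / (k+x)^2 = k * Real.log k / (k-1) := by
  have hk1' : k - 1 ≠ 0 := sub_ne_zero.mpr hk1
  have h := integral_Ioi_of_hasDerivAt_of_nonneg'
    (g := fun x => (k/(k-1)) * (Real.log (1+x) - Real.log (k+x)) - k * Real.log (1+x) / (k+x))
    (g' := fun x => k * Real.log (1+x) / (k+x)^2)
    (fun x hx => aux_deriv k hk hk1 hx)
    (fun x hx => by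
      have h1 : (0:ℝ) ≤ Real.log (1+x) := Real.log_nonneg (by simp at hx; linarith)
      have h2 : (0:ℝ) < k + x := by simp at hx; linarith
      positivity)
    (aux_tendsto k hk)
  rw [h]
  simp [Real.log_one]
  field_simp


/-- If `X` is a nonnegative random variable with density `k/(k+x)²` on `[0,∞)` for some
`k > 0`, `k ≠ 1`, then `E[log₂(1+X)] = log₂(1/k)/(1/k − 1)`. -/
theorem expectation_logb_ratio
    {Ω : Type*} [MeasurableSpace Ω] (μ : Measure Ω) [IsProbabilityMeasure μ]
    (X : Ω → ℝ) (hmeas : Measurable X)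
    (k : ℝ) (hk : 0 < k) (hk1 : k ≠ 1)
    (hpdf : μ.map X =
      volume.withDensity
        (fun x => ENNReal.ofReal (Set.indicator (Set.Ici (0 : ℝ))
          (fun x => k / (k + x) ^ 2) x))) :
    ∫ ω, logb 2 (1 + X ω) ∂μ = logb 2 (1 / k) / (1 / k - 1) := by
  have hk1' : k - 1 ≠ 0 := sub_ne_zero.mpr hk1
  have hlog2 : Real.log 2 ≠ 0 := ne_of_gt (Real.log_pos (by norm_num))
  have hmb : Measurable (fun x : ℝ => logb 2 (1+x)) := by
    unfold Real.logb
    exact (Real.measurable_log.comp (measurable_const.add measurable_id)).div_const _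
  have h1 : ∫ ω, logb 2 (1 + X ω) ∂μ = ∫ x, logb 2 (1+x) ∂(μ.map X) :=
    (integral_map hmeas.aemeasurable hmb.aestronglyMeasurable).symm
  rw [h1, hpdf]
  set d : ℝ → ℝ := Set.indicator (Set.Ici 0) (fun x => k / (k+x)^2) with hd
  have hdm : Measurable d := Measurable.indicator
    (measurable_const.div ((measurable_const.add measurable_id).pow_const 2)) measurableSet_Ici
  have hd0 : ∀ x, 0 ≤ d x := fun x => Set.indicator_nonneg (fun x _ => by positivity) x
  have h2 : ∫ x, logb 2 (1+x) ∂(volume.withDensity fun x => ENNReal.ofReal (d x))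
      = ∫ x, d x * logb 2 (1+x) := by
    rw [show (fun x => ENNReal.ofReal (d x)) = fun x => ((fun x => (d x).toNNReal) x : ℝ≥0∞)
      from rfl]
    rw [integral_withDensity_eq_integral_smul (hdm.real_toNNReal) _]
    congr 1; funext x
    simp [NNReal.smul_def, Real.coe_toNNReal _ (hd0 x)]
  rw [h2]
  have h3 : ∫ x, d x * logb 2 (1+x)
      = ∫ x in Ioi (0:ℝ), (Real.log 2)⁻¹ * (k * Real.log (1+x) / (k+x)^2) := by
    rw [hd]
    have : (fun x => Set.indicator (Set.Ici (0:ℝ)) (fun x => k / (k+x)^2) x * logb 2 (1+x))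
        = Set.indicator (Set.Ici (0:ℝ)) (fun x => k / (k+x)^2 * logb 2 (1+x)) := by
      funext x
      by_cases hx : x ∈ Set.Ici (0:ℝ) <;> simp [hx]
    rw [this, integral_indicator measurableSet_Ici, integral_Ici_eq_integral_Ioi]
    apply setIntegral_congr_fun measurableSet_Ioi
    intro x hx
    simp only [Real.logb]
    field_simp
  rw [h3, MeasureTheory.integral_const_mul, aux_integral k hk hk1]
  rw [Real.logb, Real.log_div one_ne_zero hk.ne', Real.log_one]
  have h1k : (1:ℝ) - k ≠ 0 := fun h => hk1 (by linarith)
  field_simp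
  ring
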